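/- There exists c > 0 such that the following holds: for every n ∈ ℕ, every natural number p with 0 ≤ p ≤ 10^n, and every integer L > n, setting t = p/10^n we have |μ̂_t(10^L)| ≥ c · (1/3)^n. -/

import Mathlib

open MeasureTheory Filter Set
open scoped ENNReal NNReal

/-- The Fourier transform of a measure on `ℝ`: `μ̂(ξ) = ∫ e^{2πiξx} dμ(x)`. -/
noncomputable def ft (μ : Measure ℝ) (ξ : ℝ) : ℂ :=
  ∫ x, Complex.exp (((2 * Real.pi * ξ * x : ℝ) : ℂ) * Complex.I) ∂μ

/-- `μ_t` is invariant for the IFS `{x/10, (x+1)/10, (x+t)/10}` with weights `(1/3,1/3,1/3)`. -/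
def muInv (t : ℝ) (μ : Measure ℝ) : Prop :=
  μ = (3 : ℝ≥0∞)⁻¹ • (Measure.map (fun x : ℝ => x / 10) μ +
    Measure.map (fun x : ℝ => (x + 1) / 10) μ + Measure.map (fun x : ℝ => (x + t) / 10) μ)

/-! ### Auxiliary lemmas -/

lemma integral_muInv {E : Type*} [NormedAddCommGroup E] [NormedSpace ℝ E]
    {t : ℝ} {μ : Measure ℝ} [IsProbabilityMeasure μ] (h : muInv t μ)
    (f : ℝ → E) (hf : Continuous f) {C : ℝ} (hb : ∀ x, ‖f x‖ ≤ C) :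
    ∫ x, f x ∂μ = (3 : ℝ)⁻¹ • ((∫ x, f (x / 10) ∂μ) + (∫ x, f ((x + 1) / 10) ∂μ)
      + (∫ x, f ((x + t) / 10) ∂μ)) := by
  have hS0 : Measurable (fun x : ℝ => x / 10) := measurable_id.div_const 10
  have hS1 : Measurable (fun x : ℝ => (x + 1) / 10) := (measurable_id.add_const 1).div_const 10
  have hS2 : Measurable (fun x : ℝ => (x + t) / 10) := (measurable_id.add_const t).div_const 10
  have key : ∀ S : ℝ → ℝ, Measurable S →
      (Integrable f (Measure.map S μ) ∧ ∫ x, f x ∂(Measure.map S μ) = ∫ x, f (S x) ∂μ) := by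
    intro S hS
    have : IsProbabilityMeasure (Measure.map S μ) := Measure.isProbabilityMeasure_map hS.aemeasurable
    have hint : Integrable f (Measure.map S μ) := by
      refine (integrable_const C).mono' (hf.aestronglyMeasurable) ?_
      exact Eventually.of_forall hb
    exact ⟨hint, integral_map hS.aemeasurable hf.aestronglyMeasurable⟩
  conv_lhs => rw [h]
  rw [integral_smul_measure, integral_add_measure ((key _ hS0).1.add_measure (key _ hS1).1) (key _ hS2).1,
    integral_add_measure (key _ hS0).1 (key _ hS1).1, (key _ hS0).2, (key _ hS1).2, (key _ hS2).2]
  congr 1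
  simp [ENNReal.toReal_inv]

noncomputable def ph (θ : ℝ) : ℂ := Complex.exp ((θ : ℂ) * Complex.I)

lemma abs_ph (θ : ℝ) : ‖ph θ‖ = 1 := Complex.norm_exp_ofReal_mul_I θ

lemma ph_intmul (m : ℤ) : ph (2 * Real.pi * m) = 1 := by
  unfold ph
  rw [← Complex.exp_int_mul_two_pi_mul_I m]
  congr 1
  push_cast
  ring

lemma ft_rec {t : ℝ} {μ : Measure ℝ} [IsProbabilityMeasure μ] (h : muInv t μ) (ξ : ℝ) :
    ft μ ξ = (3 : ℂ)⁻¹ * (1 + ph (2 * Real.pi * ξ / 10) + ph (2 * Real.pi * ξ * t / 10))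
      * ft μ (ξ / 10) := by
  have hcont : Continuous (fun x : ℝ => Complex.exp (((2 * Real.pi * ξ * x : ℝ) : ℂ) * Complex.I)) := by
    fun_prop
  have hb : ∀ x : ℝ, ‖Complex.exp (((2 * Real.pi * ξ * x : ℝ) : ℂ) * Complex.I)‖ ≤ 1 := by
    intro x
    rw [Complex.norm_exp]
    simp
  have key := integral_muInv h _ hcont hb
  have expand : ∀ (a x : ℝ),
      Complex.exp (((2 * Real.pi * ξ * ((x + a) / 10) : ℝ) : ℂ) * Complex.I)
      = ph (2 * Real.pi * ξ * a / 10) * Complex.exp (((2 * Real.pi * (ξ / 10) * x : ℝ) : ℂ) * Complex.I) := by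
    intro a x
    rw [ph, ← Complex.exp_add]
    congr 1
    push_cast
    ring
  have e0 : ∀ x : ℝ, Complex.exp (((2 * Real.pi * ξ * (x / 10) : ℝ) : ℂ) * Complex.I)
      = Complex.exp (((2 * Real.pi * (ξ / 10) * x : ℝ) : ℂ) * Complex.I) := by
    intro x; congr 2; push_cast; ring
  unfold ft
  rw [key]
  simp only [expand, e0]
  have h1 : ph (2 * Real.pi * ξ * 1 / 10) = ph (2 * Real.pi * ξ / 10) := by norm_num
  rw [integral_const_mul, integral_const_mul, h1, Complex.real_smul]
  push_cast
  ring

noncomputable def psi (x : ℝ) : ℝ := max (max (x - 1/9) (-x)) 0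

noncomputable def Tm (m : ℕ) (x : ℝ) : ℝ := min (psi x / 10 ^ m) 1

lemma psi_cont : Continuous psi := by unfold psi; fun_prop

lemma psi_nonneg (x : ℝ) : 0 ≤ psi x := le_max_right _ _

lemma Tm_cont (m : ℕ) : Continuous (Tm m) := (psi_cont.div_const _).min continuous_const

lemma Tm_nonneg (m : ℕ) (x : ℝ) : 0 ≤ Tm m x :=
  le_min (div_nonneg (psi_nonneg x) (by positivity)) one_pos.le

lemma Tm_le_one (m : ℕ) (x : ℝ) : Tm m x ≤ 1 := min_le_right _ _

lemma Tm_norm (m : ℕ) (x : ℝ) : ‖Tm m x‖ ≤ 1 := by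
  rw [Real.norm_eq_abs, abs_of_nonneg (Tm_nonneg m x)]; exact Tm_le_one m x

lemma psi_contract {a : ℝ} (ha0 : 0 ≤ a) (ha1 : a ≤ 1) (x : ℝ) :
    psi ((x + a) / 10) ≤ psi x / 10 := by
  unfold psi
  have h1 : (x + a) / 10 - 1/9 ≤ max (max (x - 1/9) (-x)) 0 / 10 := by
    have : (x + a) / 10 - 1/9 ≤ (x - 1/9) / 10 := by linarith
    exact this.trans (by gcongr; exact le_max_of_le_left (le_max_left _ _))
  have h2 : -((x + a) / 10) ≤ max (max (x - 1/9) (-x)) 0 / 10 := by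
    have : -((x + a) / 10) ≤ (-x) / 10 := by linarith
    exact this.trans (by gcongr; exact le_max_of_le_left (le_max_right _ _))
  have h3 : (0:ℝ) ≤ max (max (x - 1/9) (-x)) 0 / 10 := by positivity
  exact max_le (max_le h1 h2) h3

lemma Tm_contract {a : ℝ} (ha0 : 0 ≤ a) (ha1 : a ≤ 1) (m : ℕ) (x : ℝ) :
    Tm m ((x + a) / 10) ≤ Tm (m + 1) x := by
  unfold Tm
  refine min_le_min ?_ le_rfl
  have := psi_contract ha0 ha1 x
  rw [pow_succ]
  calc psi ((x + a) / 10) / 10 ^ m ≤ (psi x / 10) / 10 ^ m := by gcongr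
    _ = psi x / (10 ^ m * 10) := by ring

lemma ae_mem_Icc {t : ℝ} (ht0 : 0 ≤ t) (ht1 : t ≤ 1) {μ : Measure ℝ}
    [IsProbabilityMeasure μ] (h : muInv t μ) :
    ∀ᵐ x ∂μ, x ∈ Icc (0 : ℝ) (1/9) := by
  have hint : ∀ m, Integrable (Tm m) μ := fun m =>
    (integrable_const 1).mono' (Tm_cont m).aestronglyMeasurable
      (Eventually.of_forall (Tm_norm m))
  have step : ∀ m, ∫ x, Tm m x ∂μ ≤ ∫ x, Tm (m + 1) x ∂μ := by
    intro m
    have key := integral_muInv h (Tm m) (Tm_cont m) (Tm_norm m)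
    rw [key]
    have hic : ∀ S : ℝ → ℝ, Continuous S → Integrable (fun x => Tm m (S x)) μ := by
      intro S hS
      exact (integrable_const 1).mono' ((Tm_cont m).comp hS).aestronglyMeasurable
        (Eventually.of_forall (fun x => Tm_norm m (S x)))
    have b0 : ∫ x, Tm m (x / 10) ∂μ ≤ ∫ x, Tm (m+1) x ∂μ := by
      refine integral_mono (hic _ (by fun_prop)) (hint _) (fun x => ?_)
      have := Tm_contract le_rfl zero_le_one m x
      simpa using this
    have b1 : ∫ x, Tm m ((x + 1) / 10) ∂μ ≤ ∫ x, Tm (m+1) x ∂μ :=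
      integral_mono (hic _ (by fun_prop)) (hint _) (fun x => Tm_contract zero_le_one le_rfl m x)
    have b2 : ∫ x, Tm m ((x + t) / 10) ∂μ ≤ ∫ x, Tm (m+1) x ∂μ :=
      integral_mono (hic _ (by fun_prop)) (hint _) (fun x => Tm_contract ht0 ht1 m x)
    rw [smul_eq_mul]
    linarith
  have mono : ∀ m, ∫ x, Tm 0 x ∂μ ≤ ∫ x, Tm m x ∂μ := by
    intro m
    induction m with
    | zero => exact le_rfl
    | succ k ih => exact ih.trans (step k)
  have hlim : Tendsto (fun m => ∫ x, Tm m x ∂μ) atTop (nhds (∫ x, (0:ℝ) ∂μ)) := by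
    refine tendsto_integral_of_dominated_convergence (fun _ => (1:ℝ))
      (fun m => (Tm_cont m).aestronglyMeasurable) (integrable_const 1)
      (fun m => Eventually.of_forall (Tm_norm m)) (Eventually.of_forall (fun x => ?_))
    have h1 : Tendsto (fun m : ℕ => psi x / 10 ^ m) atTop (nhds 0) :=
      tendsto_const_nhds.div_atTop (tendsto_pow_atTop_atTop_of_one_lt (by norm_num))
    have h2 : Tendsto (fun m : ℕ => min (psi x / 10 ^ m) 1) atTop (nhds (min 0 1)) :=
      h1.min tendsto_const_nhds
    simpa [Tm] using h2
  rw [integral_zero] at hlim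
  have hle0 : ∫ x, Tm 0 x ∂μ ≤ 0 := ge_of_tendsto hlim (Eventually.of_forall mono)
  have heq0 : ∫ x, Tm 0 x ∂μ = 0 :=
    le_antisymm hle0 (integral_nonneg (Tm_nonneg 0))
  have hae : (fun x => Tm 0 x) =ᶠ[ae μ] 0 :=
    (integral_eq_zero_iff_of_nonneg (Tm_nonneg 0) (hint 0)).mp heq0
  filter_upwards [hae] with x hx
  simp only [Pi.zero_apply, Tm, pow_zero, div_one] at hx
  have hψ : psi x = 0 := by
    rcases min_eq_iff.mp hx with h' | h'
    · exact h'.1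
    · linarith
  unfold psi at hψ
  constructor
  · nlinarith [le_max_of_le_left (le_max_right (x - 1/9) (-x)) (c := (0:ℝ)), hψ]
  · nlinarith [le_max_of_le_left (le_max_left (x - 1/9) (-x)) (c := (0:ℝ)), hψ]

lemma ft_one_lb {t : ℝ} (ht0 : 0 ≤ t) (ht1 : t ≤ 1) {μ : Measure ℝ}
    [IsProbabilityMeasure μ] (h : muInv t μ) :
    Real.cos (2 * Real.pi / 9) ≤ ‖ft μ 1‖ := by
  have hae := ae_mem_Icc ht0 ht1 h
  have hf : Integrable (fun x : ℝ => Complex.exp (((2 * Real.pi * 1 * x : ℝ) : ℂ) * Complex.I)) μ := by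
    refine (integrable_const 1).mono' (Continuous.aestronglyMeasurable (by fun_prop))
      (Eventually.of_forall (fun x => ?_))
    rw [Complex.norm_exp]
    simp
  have hre : ∫ x, Real.cos (2 * Real.pi * 1 * x) ∂μ = (ft μ 1).re := by
    have h2 := integral_re hf
    simp only [RCLike.re_to_complex] at h2
    rw [ft, ← h2]
    congr 1
    funext x
    exact (Complex.exp_ofReal_mul_I_re _).symm
  have hcosint : Integrable (fun x : ℝ => Real.cos (2 * Real.pi * 1 * x)) μ := by
    refine (integrable_const 1).mono' (Continuous.aestronglyMeasurable (by fun_prop))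
      (Eventually.of_forall (fun x => ?_))
    rw [Real.norm_eq_abs]
    exact Real.abs_cos_le_one _
  have hmono : Real.cos (2 * Real.pi / 9) ≤ ∫ x, Real.cos (2 * Real.pi * 1 * x) ∂μ := by
    have hb : ∫ x, Real.cos (2 * Real.pi / 9) ∂μ ≤ ∫ x, Real.cos (2 * Real.pi * 1 * x) ∂μ := by
      refine integral_mono_ae (integrable_const _) hcosint ?_
      filter_upwards [hae] with x hx
      rcases hx with ⟨hx0, hx1⟩
      refine Real.cos_le_cos_of_nonneg_of_le_pi (by positivity) ?_ ?_
      · nlinarith [Real.pi_pos]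
      · nlinarith [Real.pi_pos]
    simpa using hb
  calc Real.cos (2 * Real.pi / 9) ≤ (ft μ 1).re := hre ▸ hmono
    _ ≤ ‖ft μ 1‖ := Complex.re_le_norm _

/-- There is `c > 0` such that for every `n`, every `0 ≤ p ≤ 10^n` and every `L > n`,
for `t = p/10^n` we have `|μ̂_t(10^L)| ≥ c (1/3)^n`. -/
theorem stmt14 :
    ∃ c > 0, ∀ (n p L : ℕ), p ≤ 10 ^ n → n < L →
      ∀ μ : Measure ℝ, IsProbabilityMeasure μ → muInv ((p : ℝ) / 10 ^ n) μ →
        c * (1 / 3 : ℝ) ^ n ≤ ‖ft μ ((10 : ℝ) ^ L)‖ := by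
  refine ⟨Real.cos (2 * Real.pi / 9), ?_, ?_⟩
  · apply Real.cos_pos_of_mem_Ioo
    constructor <;> nlinarith [Real.pi_pos]
  intro n p L hp hL μ hprob hinv
  set t : ℝ := (p : ℝ) / 10 ^ n with ht
  have ht0 : 0 ≤ t := by positivity
  have ht1 : t ≤ 1 := by
    rw [ht, div_le_one (by positivity)]
    calc ((p : ℝ)) ≤ ((10 ^ n : ℕ) : ℝ) := by exact_mod_cast hp
      _ = (10 : ℝ) ^ n := by push_cast; ring
  -- phase at integer frequencies
  have e1 : ∀ k : ℕ, 1 ≤ k → ph (2 * Real.pi * (10 : ℝ) ^ k / 10) = 1 := by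
    intro k hk
    have : 2 * Real.pi * (10 : ℝ) ^ k / 10 = 2 * Real.pi * ((10 ^ (k - 1) : ℤ) : ℝ) := by
      have h10 : (10 : ℝ) ^ k = 10 ^ (k - 1) * 10 := by
        rw [← pow_succ]; congr 1; omega
      rw [h10]; push_cast; ring
    rw [this, ph_intmul]
  have e2 : ∀ k : ℕ, n < k → ph (2 * Real.pi * (10 : ℝ) ^ k * t / 10) = 1 := by
    intro k hk
    have : 2 * Real.pi * (10 : ℝ) ^ k * t / 10
        = 2 * Real.pi * (((p * 10 ^ (k - 1 - n) : ℕ) : ℤ) : ℝ) := by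
      have h10 : (10 : ℝ) ^ k = 10 ^ n * 10 ^ (k - 1 - n) * 10 := by
        rw [← pow_add, ← pow_succ]; congr 1; omega
      rw [ht, h10]
      have hne : (10 : ℝ) ^ n ≠ 0 := by positivity
      push_cast
      field_simp
    rw [this, ph_intmul]
  -- Step A : ft μ (10^L) = ft μ (10^n)
  have stepA : ∀ k : ℕ, n ≤ k → ft μ ((10 : ℝ) ^ k) = ft μ ((10 : ℝ) ^ n) := by
    intro k hk
    induction k with
    | zero =>
      have hn : n = 0 := by omega
      rw [hn]
    | succ m ih =>
      rcases Nat.lt_or_ge n (m + 1) with hlt | hge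
      · have hnm : n ≤ m := by omega
        have hrec := ft_rec hinv ((10 : ℝ) ^ (m + 1))
        rw [e1 (m+1) (by omega), e2 (m+1) hlt] at hrec
        have hdiv : (10 : ℝ) ^ (m + 1) / 10 = (10 : ℝ) ^ m := by
          rw [pow_succ]; field_simp
        rw [hdiv] at hrec
        rw [hrec, ih hnm]
        norm_num
      · have hn : n = m + 1 := by omega
        rw [hn]
  have hA : ft μ ((10 : ℝ) ^ L) = ft μ ((10 : ℝ) ^ n) := stepA L (by omega)
  -- Step B : (1/3)^k * |ft μ 1| ≤ |ft μ (10^k)| for all k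
  have stepB : ∀ k : ℕ, (1 / 3 : ℝ) ^ k * ‖ft μ 1‖ ≤ ‖ft μ ((10 : ℝ) ^ k)‖ := by
    intro k
    induction k with
    | zero => simp
    | succ m ih =>
      have hrec := ft_rec hinv ((10 : ℝ) ^ (m + 1))
      rw [e1 (m+1) (by omega)] at hrec
      have hdiv : (10 : ℝ) ^ (m + 1) / 10 = (10 : ℝ) ^ m := by
        rw [pow_succ]; field_simp
      rw [hdiv] at hrec
      set z := ph (2 * Real.pi * (10 : ℝ) ^ (m + 1) * t / 10) with hz
      have habsz : ‖z‖ = 1 := abs_ph _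
      have hlb : 1 ≤ ‖1 + 1 + z‖ := by
        have htri := norm_add_le (1 + 1 + z) (-z)
        simp only [add_neg_cancel_right] at htri
        rw [norm_neg, habsz] at htri
        have : ‖(1 + 1 : ℂ)‖ = 2 := by norm_num
        rw [this] at htri
        linarith
      rw [hrec, norm_mul, norm_mul]
      have h3 : ‖(3 : ℂ)⁻¹‖ = 3⁻¹ := by
        rw [norm_inv]; norm_num
      rw [h3]
      calc (1 / 3 : ℝ) ^ (m + 1) * ‖ft μ 1‖
          = (3⁻¹ : ℝ) * ((1/3:ℝ) ^ m * ‖ft μ 1‖) := by ring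
        _ ≤ (3⁻¹ : ℝ) * ‖ft μ ((10:ℝ) ^ m)‖ := by
            apply mul_le_mul_of_nonneg_left ih (by norm_num)
        _ = (3⁻¹ : ℝ) * 1 * ‖ft μ ((10:ℝ) ^ m)‖ := by ring
        _ ≤ 3⁻¹ * ‖1 + 1 + z‖ * ‖ft μ ((10:ℝ) ^ m)‖ := by
            apply mul_le_mul_of_nonneg_right _ (norm_nonneg _)
            apply mul_le_mul_of_nonneg_left hlb (by norm_num)
  -- combine
  have hone : Real.cos (2 * Real.pi / 9) ≤ ‖ft μ 1‖ := ft_one_lb ht0 ht1 hinv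
  have hpow : (0:ℝ) ≤ (1/3:ℝ) ^ n := by positivity
  calc Real.cos (2 * Real.pi / 9) * (1 / 3 : ℝ) ^ n
      ≤ ‖ft μ 1‖ * (1 / 3 : ℝ) ^ n := by
        apply mul_le_mul_of_nonneg_right hone hpow
    _ = (1 / 3 : ℝ) ^ n * ‖ft μ 1‖ := by ring
    _ ≤ ‖ft μ ((10 : ℝ) ^ n)‖ := stepB n
    _ = ‖ft μ ((10 : ℝ) ^ L)‖ := by rw [hA]
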